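/- Let G be a group, σ an automorphism of G, and S a subset of G. The twisted Cayley sum graph C_Σ(G,S)^σ is undirected (i.e., whenever there is an edge from x to y there is an edge from y to x) if and only if σ²(g)·σ(s)·g^{-1} ∈ S for every s ∈ S and g ∈ G. -/
import Mathlib


/-! Game of cops and robbers on a (possibly directed, loops-allowed) graph given by an
adjacency relation `A` on a vertex type `V`.

A single move (of a cop or of the robber) consists of staying put or moving to an
adjacent vertex.  A strategy for `k` cops is a function `CS` from the full history of
robber positions to the positions of the `k` cops: `CS []` is the initial placement of
the cops (chosen before the robber places itself), and `CS [r₀, …, rₙ]` is the cops'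
position after their `(n+1)`-st turn, having seen the robber at `r₀, …, rₙ` (the robber
at position `rₙ` after its `(n+1)`-st turn).  Since the cops' positions are completely
determined by the sequence of robber positions, quantifying over all legal sequences of
robber positions captures every robber strategy with full information.  The cops win if
at some moment (after a cop turn or after a robber turn) some cop occupies the robber's
vertex. -/

section CopsAndRobbers

variable {V : Type*}

/-- A legal single move: stay put or move along an edge. -/
def MoveStep (A : V → V → Prop) (u v : V) : Prop := u = v ∨ A u v

/-- Positions of the cops after their `n`-th turn, given the cop strategy `CS` and the
sequence `r` of robber positions (`r m` is the robber's position after its `m`-th turn,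
`r 0` being its initial placement). -/
def copPos {k : ℕ} (CS : List V → Fin k → V) (r : ℕ → V) (n : ℕ) : Fin k → V :=
  CS (List.ofFn fun j : Fin n => r j.1)

/-- `k` cops have a winning strategy on the graph with adjacency relation `A`. -/
def CopsWin (A : V → V → Prop) (k : ℕ) : Prop :=
  ∃ CS : List V → Fin k → V,
    (∀ (l : List V) (v : V) (i : Fin k), MoveStep A (CS l i) (CS (l ++ [v]) i)) ∧
    ∀ r : ℕ → V, (∀ n, MoveStep A (r n) (r (n + 1))) →
      ∃ n, ∃ i : Fin k, copPos CS r n i = r n ∨ copPos CS r (n + 1) i = r n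

/-- The cop number: the least number of cops possessing a winning strategy. -/
noncomputable def copNumber (A : V → V → Prop) : ℕ := sInf {k | CopsWin A k}

/-- The graph is undirected: the adjacency relation is symmetric. -/
def IsUndirected (A : V → V → Prop) : Prop := ∀ u v, A u v → A v u

/-- The graph is connected: any two vertices are joined by a path following edges in
either direction. -/
def IsConn (A : V → V → Prop) : Prop :=
  ∀ u v : V, Relation.ReflTransGen (fun a b => A a b ∨ A b a) u v

end CopsAndRobbers

/-- The Cayley graph `C(G,S)`: edge from `u` to `v` iff `v = u * s` for some `s ∈ S`. -/
def cayleyAdj {G : Type*} [Group G] (S : Set G) (u v : G) : Prop :=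
  ∃ s ∈ S, v = u * s

/-- The Cayley sum graph `C_Σ(G,S)`: edge from `u` to `v` iff `v = u⁻¹ * s` for some
`s ∈ S`. -/
def cayleySumAdj {G : Type*} [Group G] (S : Set G) (u v : G) : Prop :=
  ∃ s ∈ S, v = u⁻¹ * s

/-- The twisted Cayley graph `C(G,S)^σ`: edge from `x` to `y` iff `y = σ (x * s)` for
some `s ∈ S`. -/
def twistedCayleyAdj {G : Type*} [Group G] (σ : G ≃* G) (S : Set G) (x y : G) : Prop :=
  ∃ s ∈ S, y = σ (x * s)

/-- The twisted Cayley sum graph `C_Σ(G,S)^σ`: edge from `x` to `y` iff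
`y = σ (x⁻¹ * s)` for some `s ∈ S`. -/
def twistedCayleySumAdj {G : Type*} [Group G] (σ : G ≃* G) (S : Set G) (x y : G) : Prop :=
  ∃ s ∈ S, y = σ (x⁻¹ * s)

/-- the twisted Cayley sum graph `C_Σ(G,S)^σ` is undirected if and only if
`σ²(g) · σ(s) · g⁻¹ ∈ S` for every `s ∈ S` and `g ∈ G`. -/
theorem twistedCayleySum_undirected_iff {G : Type*} [Group G] (σ : G ≃* G) (S : Set G) :
    IsUndirected (twistedCayleySumAdj σ S) ↔
      ∀ s ∈ S, ∀ g : G, σ (σ g) * σ s * g⁻¹ ∈ S := by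
  constructor
  · intro h s hs g
    have hedge : twistedCayleySumAdj σ S (σ g)⁻¹ (σ (σ g * s)) := ⟨s, hs, by simp⟩
    obtain ⟨t, ht, hx⟩ := h _ _ hedge
    have : t = σ (σ g) * σ s * g⁻¹ := by
      have := congrArg σ.symm hx
      simp at this
      rw [this]
      simp [map_mul, mul_assoc]
    rwa [this] at ht
  · intro h u v ⟨s, hs, hv⟩
    refine ⟨σ (σ (σ.symm u⁻¹)) * σ s * (σ.symm u⁻¹)⁻¹, h s hs _, ?_⟩
    subst hv
    simp [map_mul, mul_assoc]
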